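/- Let Z' be a real random variable with E[Z'] = 0 and E[e^{Z'}] ≤ K for some K ≥ 1. Then for any event A with q = P(A) > 0, E[Z' | A] ≥ -6·max((K-1)/q, √((K-1)/q)). -/

import Mathlib

open MeasureTheory

lemma key_ineq (y : ℝ) :
    min y (y ^ 2) / 6 ≤ Real.exp (-y) + y - 1 := by
  rcases le_or_gt y (6 / 5) with h | h
  · have h0 : 0 ≤ 1 - y / 3 := by linarith
    have h1 : 1 - y / 3 ≤ Real.exp (-(y / 3)) := by
      have := Real.add_one_le_exp (-(y / 3)); linarith
    have h2 : (1 - y / 3) ^ 3 ≤ Real.exp (-y) := by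
      have h3 : (1 - y / 3) ^ 3 ≤ (Real.exp (-(y / 3))) ^ 3 := pow_le_pow_left₀ h0 h1 3
      have h4 : (Real.exp (-(y / 3))) ^ 3 = Real.exp (-y) := by
        rw [← Real.exp_nat_mul]; norm_num; ring
      linarith
    have hmin : min y (y ^ 2) ≤ y ^ 2 := min_le_right _ _
    nlinarith [sq_nonneg y]
  · have hmin : min y (y ^ 2) ≤ y := min_le_left _ _
    have := Real.exp_pos (-y)
    linarith

/-- If `E[Z'] = 0` and `E[e^{Z'}] ≤ K` with `K ≥ 1`, then for any event `A` with
`q = P(A) > 0`, `E[Z' | A] ≥ -6·max((K-1)/q, √((K-1)/q))`. -/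
theorem cond_exp_lower_bound_of_exp_moment {Ω : Type*} [MeasurableSpace Ω] (P : Measure Ω)
    [IsProbabilityMeasure P] (Z : Ω → ℝ) (hZmeas : Measurable Z)
    (hZint : Integrable Z P) (hZmean : ∫ ω, Z ω ∂P = 0)
    (K : ℝ) (hK : 1 ≤ K)
    (hexpint : Integrable (fun ω => Real.exp (Z ω)) P)
    (hexp : ∫ ω, Real.exp (Z ω) ∂P ≤ K)
    (A : Set Ω) (hA : MeasurableSet A) (hq : 0 < (P A).toReal) :
    -(6 * max ((K - 1) / (P A).toReal) (Real.sqrt ((K - 1) / (P A).toReal))) ≤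
      (∫ ω in A, Z ω ∂P) / (P A).toReal := by
  set q : ℝ := (P A).toReal with hqdef
  set m : ℝ := (∫ ω in A, Z ω ∂P) / q with hmdef
  set c : ℝ := (K - 1) / q with hcdef
  have hq0 : q ≠ 0 := ne_of_gt hq
  have hc0 : 0 ≤ c := div_nonneg (by linarith) hq.le
  -- restrict measure is finite and nonzero
  have hPAne : P A ≠ 0 := by
    intro h
    rw [hqdef, h] at hq
    simp at hq
  haveI : NeZero (P.restrict A) := by
    constructor
    intro h
    apply hPAne
    have := congrArg (fun μ : Measure Ω => μ Set.univ) h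
    simpa [Measure.restrict_apply_univ] using this
  -- integral of nonneg function over A bounded by total
  have hφint : Integrable (fun ω => Real.exp (Z ω) - Z ω - 1) P :=
    (hexpint.sub hZint).sub (integrable_const 1)
  have hφnn : 0 ≤ᵐ[P] fun ω => Real.exp (Z ω) - Z ω - 1 := by
    filter_upwards with ω
    have := Real.add_one_le_exp (Z ω)
    simp only [Pi.zero_apply]; linarith
  have hsetle : ∫ ω in A, (Real.exp (Z ω) - Z ω - 1) ∂P ≤
      ∫ ω, (Real.exp (Z ω) - Z ω - 1) ∂P := setIntegral_le_integral hφint hφnn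
  have hsubint : Integrable (fun ω => Real.exp (Z ω) - Z ω) P := hexpint.sub hZint
  have htotal : ∫ ω, (Real.exp (Z ω) - Z ω - 1) ∂P ≤ K - 1 := by
    rw [integral_sub hsubint (integrable_const 1),
        integral_sub hexpint hZint, hZmean]
    simp only [integral_const, measure_univ, ENNReal.toReal_one, probReal_univ, smul_eq_mul, one_mul]
    linarith
  have hsplit : ∫ ω in A, (Real.exp (Z ω) - Z ω - 1) ∂P =
      (∫ ω in A, Real.exp (Z ω) ∂P) - (∫ ω in A, Z ω ∂P) - q := by
    have hsubint' : Integrable (fun ω => Real.exp (Z ω) - Z ω) (P.restrict A) :=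
      hsubint.restrict
    rw [integral_sub hsubint' (integrable_const 1),
        integral_sub hexpint.restrict hZint.restrict]
    simp [hqdef, measureReal_def]
  -- Jensen
  have hjensen : Real.exp m ≤ (∫ ω in A, Real.exp (Z ω) ∂P) / q := by
    have hcv : ConvexOn ℝ Set.univ Real.exp := convexOn_exp
    have := hcv.map_average_le (μ := P.restrict A) (f := Z)
      Real.continuous_exp.continuousOn isClosed_univ
      (Filter.Eventually.of_forall fun x => Set.mem_univ _)
      hZint.restrict hexpint.restrict
    rwa [average_eq, average_eq, measureReal_def, Measure.restrict_apply_univ, smul_eq_mul, smul_eq_mul,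
      ← hqdef, inv_mul_eq_div, inv_mul_eq_div, ← hmdef] at this
  -- combine: exp m - m - 1 ≤ c
  have hkey : Real.exp m - m - 1 ≤ c := by
    have h1 : (∫ ω in A, Real.exp (Z ω) ∂P) - (∫ ω in A, Z ω ∂P) - q ≤ K - 1 := by
      rw [← hsplit]; linarith
    have h2 : ((∫ ω in A, Real.exp (Z ω) ∂P) - (∫ ω in A, Z ω ∂P) - q) / q ≤ c := by
      rw [hcdef]; exact div_le_div_of_nonneg_right h1 hq.le
    have h3 : ((∫ ω in A, Real.exp (Z ω) ∂P) - (∫ ω in A, Z ω ∂P) - q) / q =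
        (∫ ω in A, Real.exp (Z ω) ∂P) / q - m - 1 := by
      field_simp [hmdef]
      rw [hmdef, mul_div_assoc', mul_div_cancel_left₀ _ hq0]
    linarith [hjensen, h2, h3.symm ▸ h2]
  -- conclude
  set M : ℝ := max c (Real.sqrt c) with hMdef
  have hM0 : 0 ≤ M := le_trans hc0 (le_max_left _ _)
  rcases le_or_gt 0 m with hm | hm
  · linarith
  · set y : ℝ := -m with hydef
    have hy0 : 0 < y := by simpa [hydef] using hm
    have h1 : min y (y ^ 2) / 6 ≤ c := by
      have := key_ineq y
      have hey : Real.exp (-y) = Real.exp m := by rw [hydef, neg_neg]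
      rw [hey] at this
      linarith
    have hgoal : y ≤ 6 * M := by
      rcases le_total y (y ^ 2) with hc1 | hc1
      · have : y ≤ 6 * c := by rw [min_eq_left hc1] at h1; nlinarith [h1]
        calc y ≤ 6 * c := this
          _ ≤ 6 * M := by have := le_max_left c (Real.sqrt c); linarith
      · have hy2 : y ^ 2 ≤ 6 * c := by rw [min_eq_right hc1] at h1; nlinarith [h1]
        have hsq : y ≤ Real.sqrt (6 * c) := by
          rw [show y = Real.sqrt (y ^ 2) by rw [Real.sqrt_sq hy0.le]]
          exact Real.sqrt_le_sqrt hy2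
        have h36 : Real.sqrt (6 * c) ≤ 6 * Real.sqrt c := by
          rw [show (6 : ℝ) * Real.sqrt c = Real.sqrt 36 * Real.sqrt c by
            rw [show (36 : ℝ) = 6 ^ 2 by norm_num, Real.sqrt_sq]; norm_num,
            ← Real.sqrt_mul (by norm_num)]
          exact Real.sqrt_le_sqrt (by linarith)
        calc y ≤ Real.sqrt (6 * c) := hsq
          _ ≤ 6 * Real.sqrt c := h36
          _ ≤ 6 * M := by have := le_max_right c (Real.sqrt c); linarith
    linarith [hgoal]
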